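/- In the Gaudin realization, the generating function of integrals of motion commutes with itself at different values of the spectral parameter: for all λ, μ ∈ ℂ ∖ {z₁,…,z_N} with λ ≠ μ, t(λ) t(μ) = t(μ) t(λ). -/
import Mathlib


/-- osp(1|2) Gaudin model data: sites, inhomogeneity parameters, and local
osp(1|2) operators with super-commutation relations across sites. -/
structure OspGaudinData (N : ℕ) (H : Type*) [AddCommGroup H] [Module ℂ H] where
  z : Fin N → ℂ
  z_inj : Function.Injective z
  h : Fin N → Module.End ℂ H
  Xp : Fin N → Module.End ℂ H
  Xm : Fin N → Module.End ℂ H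
  vp : Fin N → Module.End ℂ H
  vm : Fin N → Module.End ℂ H
  rel_hXp : ∀ a, h a * Xp a - Xp a * h a = (2:ℂ) • Xp a
  rel_hXm : ∀ a, h a * Xm a - Xm a * h a = (-2:ℂ) • Xm a
  rel_XpXm : ∀ a, Xp a * Xm a - Xm a * Xp a = h a
  rel_hvp : ∀ a, h a * vp a - vp a * h a = vp a
  rel_hvm : ∀ a, h a * vm a - vm a * h a = -vm a
  rel_vpvm : ∀ a, vp a * vm a + vm a * vp a = -h a
  rel_Xmvp : ∀ a, Xm a * vp a - vp a * Xm a = vm a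
  rel_Xpvm : ∀ a, Xp a * vm a - vm a * Xp a = vp a
  rel_vpvp : ∀ a, vp a * vp a = Xp a
  rel_vmvm : ∀ a, vm a * vm a = -Xm a
  rel_Xpvp : ∀ a, Xp a * vp a = vp a * Xp a
  rel_Xmvm : ∀ a, Xm a * vm a = vm a * Xm a
  even_comm : ∀ a b, a ≠ b → ∀ Y ∈ ({h a, Xp a, Xm a} : Set (Module.End ℂ H)),
      ∀ Z ∈ ({h b, Xp b, Xm b, vp b, vm b} : Set (Module.End ℂ H)), Y * Z = Z * Y
  odd_anticomm : ∀ a b, a ≠ b → ∀ Y ∈ ({vp a, vm a} : Set (Module.End ℂ H)),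
      ∀ Z ∈ ({vp b, vm b} : Set (Module.End ℂ H)), Y * Z + Z * Y = 0

namespace OspGaudinData

variable {N : ℕ} {H : Type*} [AddCommGroup H] [Module ℂ H]

/-- The Gaudin realization h(λ). -/
noncomputable def hl (G : OspGaudinData N H) (lam : ℂ) : Module.End ℂ H :=
  ∑ a, ((lam - G.z a)⁻¹) • G.h a

noncomputable def Xpl (G : OspGaudinData N H) (lam : ℂ) : Module.End ℂ H :=
  ∑ a, ((lam - G.z a)⁻¹) • G.Xp a

noncomputable def Xml (G : OspGaudinData N H) (lam : ℂ) : Module.End ℂ H :=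
  ∑ a, ((lam - G.z a)⁻¹) • G.Xm a

noncomputable def vpl (G : OspGaudinData N H) (lam : ℂ) : Module.End ℂ H :=
  ∑ a, ((lam - G.z a)⁻¹) • G.vp a

noncomputable def vml (G : OspGaudinData N H) (lam : ℂ) : Module.End ℂ H :=
  ∑ a, ((lam - G.z a)⁻¹) • G.vm a

/-- h′(λ) = −Σ_a h_a/(λ − z_a)². -/
noncomputable def hl' (G : OspGaudinData N H) (lam : ℂ) : Module.End ℂ H :=
  -∑ a, (((lam - G.z a)^2)⁻¹) • G.h a

/-- The generating function t(λ) of the integrals of motion. -/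
noncomputable def tOp (G : OspGaudinData N H) (lam : ℂ) : Module.End ℂ H :=
  G.hl lam * G.hl lam + G.hl' lam + (4:ℂ) • (G.Xpl lam * G.Xml lam)
    + (2:ℂ) • (G.vpl lam * G.vml lam)

/-- The Gaudin Hamiltonian at site `a`. -/
noncomputable def Gham (G : OspGaudinData N H) (a : Fin N) : Module.End ℂ H :=
  ∑ b ∈ Finset.univ.erase a, ((G.z a - G.z b)⁻¹) •
    (G.h a * G.h b + (2:ℂ) • (G.Xp a * G.Xm b + G.Xm a * G.Xp b)
      + (G.vp a * G.vm b - G.vm a * G.vp b))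

end OspGaudinData


namespace OspGaudinData

section Dev
variable {N : ℕ} {H : Type*} [AddCommGroup H] [Module ℂ H] (G : OspGaudinData N H)

/-- two-site interaction term -/
noncomputable def Th (a b : Fin N) : Module.End ℂ H :=
  G.h a * G.h b + (2:ℂ) • (G.Xp a * G.Xm b + G.Xm a * G.Xp b)
    + (G.vp a * G.vm b - G.vm a * G.vp b)

/-- local Casimir -/
noncomputable def Cas (a : Fin N) : Module.End ℂ H :=
  G.h a * G.h a - G.h a + (4:ℂ) • (G.Xp a * G.Xm a) + (2:ℂ) • (G.vp a * G.vm a)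

lemma Gham_eq (a : Fin N) :
    G.Gham a = ∑ b ∈ Finset.univ.erase a, ((G.z a - G.z b)⁻¹) • G.Th a b := rfl

lemma sm2 (m : Module.End ℂ H) : (2:ℂ) • m = m + m := two_smul ℂ m
lemma sm4 (m : Module.End ℂ H) : (4:ℂ) • m = m + m + (m + m) := by
  rw [show (4:ℂ) = 2 + 2 by norm_num, add_smul, sm2]

-- same-site rewrite rules, smul-free
lemma rXph (s : Fin N) : G.Xp s * G.h s = G.h s * G.Xp s - G.Xp s - G.Xp s := by
  have h0 := G.rel_hXp s; rw [sm2] at h0; linear_combination (norm := noncomm_ring) -h0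
lemma rXmh (s : Fin N) : G.Xm s * G.h s = G.h s * G.Xm s + G.Xm s + G.Xm s := by
  have h0 := G.rel_hXm s
  rw [show (-2:ℂ) = -(2:ℂ) by norm_num, neg_smul, sm2] at h0
  linear_combination (norm := noncomm_ring) -h0
lemma rXmXp (s : Fin N) : G.Xm s * G.Xp s = G.Xp s * G.Xm s - G.h s := by
  have h0 := G.rel_XpXm s; linear_combination (norm := noncomm_ring) -h0
lemma rhvp (s : Fin N) : G.h s * G.vp s = G.vp s * G.h s + G.vp s := by
  have h0 := G.rel_hvp s; linear_combination (norm := noncomm_ring) h0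
lemma rhvm (s : Fin N) : G.h s * G.vm s = G.vm s * G.h s - G.vm s := by
  have h0 := G.rel_hvm s; linear_combination (norm := noncomm_ring) h0
lemma rvmvp (s : Fin N) : G.vm s * G.vp s = -G.h s - G.vp s * G.vm s := by
  have h0 := G.rel_vpvm s; linear_combination (norm := noncomm_ring) h0
lemma rXmvp (s : Fin N) : G.Xm s * G.vp s = G.vp s * G.Xm s + G.vm s := by
  have h0 := G.rel_Xmvp s; linear_combination (norm := noncomm_ring) h0
lemma rXpvm (s : Fin N) : G.Xp s * G.vm s = G.vm s * G.Xp s + G.vp s := by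
  have h0 := G.rel_Xpvm s; linear_combination (norm := noncomm_ring) h0
lemma rvpvp (s : Fin N) : G.vp s * G.vp s = G.Xp s := G.rel_vpvp s
lemma rvmvm (s : Fin N) : G.vm s * G.vm s = -G.Xm s := G.rel_vmvm s
lemma rXpvp (s : Fin N) : G.Xp s * G.vp s = G.vp s * G.Xp s := G.rel_Xpvp s
lemma rXmvm (s : Fin N) : G.Xm s * G.vm s = G.vm s * G.Xm s := G.rel_Xmvm s

end Dev
end OspGaudinData

namespace OspGaudinData
section Cross
variable {N : ℕ} {H : Type*} [AddCommGroup H] [Module ℂ H] (G : OspGaudinData N H)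
lemma cE_h_h {a b : Fin N} (hab : a ≠ b) : G.h a * G.h b = G.h b * G.h a :=
  G.even_comm a b hab _ (by simp) _ (by simp)
lemma cE_h_Xp {a b : Fin N} (hab : a ≠ b) : G.h a * G.Xp b = G.Xp b * G.h a :=
  G.even_comm a b hab _ (by simp) _ (by simp)
lemma cE_h_Xm {a b : Fin N} (hab : a ≠ b) : G.h a * G.Xm b = G.Xm b * G.h a :=
  G.even_comm a b hab _ (by simp) _ (by simp)
lemma cE_h_vp {a b : Fin N} (hab : a ≠ b) : G.h a * G.vp b = G.vp b * G.h a :=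
  G.even_comm a b hab _ (by simp) _ (by simp)
lemma cE_h_vm {a b : Fin N} (hab : a ≠ b) : G.h a * G.vm b = G.vm b * G.h a :=
  G.even_comm a b hab _ (by simp) _ (by simp)
lemma cE_Xp_h {a b : Fin N} (hab : a ≠ b) : G.Xp a * G.h b = G.h b * G.Xp a :=
  G.even_comm a b hab _ (by simp) _ (by simp)
lemma cE_Xp_Xp {a b : Fin N} (hab : a ≠ b) : G.Xp a * G.Xp b = G.Xp b * G.Xp a :=
  G.even_comm a b hab _ (by simp) _ (by simp)
lemma cE_Xp_Xm {a b : Fin N} (hab : a ≠ b) : G.Xp a * G.Xm b = G.Xm b * G.Xp a :=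
  G.even_comm a b hab _ (by simp) _ (by simp)
lemma cE_Xp_vp {a b : Fin N} (hab : a ≠ b) : G.Xp a * G.vp b = G.vp b * G.Xp a :=
  G.even_comm a b hab _ (by simp) _ (by simp)
lemma cE_Xp_vm {a b : Fin N} (hab : a ≠ b) : G.Xp a * G.vm b = G.vm b * G.Xp a :=
  G.even_comm a b hab _ (by simp) _ (by simp)
lemma cE_Xm_h {a b : Fin N} (hab : a ≠ b) : G.Xm a * G.h b = G.h b * G.Xm a :=
  G.even_comm a b hab _ (by simp) _ (by simp)
lemma cE_Xm_Xp {a b : Fin N} (hab : a ≠ b) : G.Xm a * G.Xp b = G.Xp b * G.Xm a :=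
  G.even_comm a b hab _ (by simp) _ (by simp)
lemma cE_Xm_Xm {a b : Fin N} (hab : a ≠ b) : G.Xm a * G.Xm b = G.Xm b * G.Xm a :=
  G.even_comm a b hab _ (by simp) _ (by simp)
lemma cE_Xm_vp {a b : Fin N} (hab : a ≠ b) : G.Xm a * G.vp b = G.vp b * G.Xm a :=
  G.even_comm a b hab _ (by simp) _ (by simp)
lemma cE_Xm_vm {a b : Fin N} (hab : a ≠ b) : G.Xm a * G.vm b = G.vm b * G.Xm a :=
  G.even_comm a b hab _ (by simp) _ (by simp)
lemma acO_vp_vp {a b : Fin N} (hab : a ≠ b) : G.vp a * G.vp b = -(G.vp b * G.vp a) :=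
  eq_neg_of_add_eq_zero_left (G.odd_anticomm a b hab _ (by simp) _ (by simp))
lemma acO_vp_vm {a b : Fin N} (hab : a ≠ b) : G.vp a * G.vm b = -(G.vm b * G.vp a) :=
  eq_neg_of_add_eq_zero_left (G.odd_anticomm a b hab _ (by simp) _ (by simp))
lemma acO_vm_vp {a b : Fin N} (hab : a ≠ b) : G.vm a * G.vp b = -(G.vp b * G.vm a) :=
  eq_neg_of_add_eq_zero_left (G.odd_anticomm a b hab _ (by simp) _ (by simp))
lemma acO_vm_vm {a b : Fin N} (hab : a ≠ b) : G.vm a * G.vm b = -(G.vm b * G.vm a) :=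
  eq_neg_of_add_eq_zero_left (G.odd_anticomm a b hab _ (by simp) _ (by simp))
end Cross
end OspGaudinData

namespace OspGaudinData
section Certs
variable {N : ℕ} {H : Type*} [AddCommGroup H] [Module ℂ H] (G : OspGaudinData N H)
lemma casC_h (s : Fin N) :
    G.Cas s * G.h s = G.h s * G.Cas s := by
  simp only [Cas, sm2, sm4]
  linear_combination (norm := noncomm_ring)
    ((4) * G.Xp s * (G.rXmh s)) + ((-2) * (G.rhvp s) * G.vm s) + ((4) * (G.rXph s) * G.Xm s) + ((-2) * G.vp s * (G.rhvm s))
lemma casC_Xp (s : Fin N) :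
    G.Cas s * G.Xp s = G.Xp s * G.Cas s := by
  simp only [Cas, sm2, sm4]
  linear_combination (norm := noncomm_ring)
    ((4) * G.Xp s * (G.rXmXp s)) + (-(G.rXph s) * G.h s) + (-(G.rXph s)) + ((-2) * (G.rXpvp s) * G.vm s) + (-G.h s * (G.rXph s)) + ((-2) * G.vp s * (G.rXpvm s)) + ((-2) * (G.rvpvp s))
lemma casC_Xm (s : Fin N) :
    G.Cas s * G.Xm s = G.Xm s * G.Cas s := by
  simp only [Cas, sm2, sm4]
  linear_combination (norm := noncomm_ring)
    (-(G.rXmh s) * G.h s) + (-(G.rXmh s)) + ((-4) * (G.rXmXp s) * G.Xm s) + ((-2) * (G.rXmvp s) * G.vm s) + (-G.h s * (G.rXmh s)) + ((-2) * G.vp s * (G.rXmvm s)) + ((-2) * (G.rvmvm s))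
lemma casC_vp (s : Fin N) :
    G.Cas s * G.vp s = G.vp s * G.Cas s := by
  simp only [Cas, sm2, sm4]
  linear_combination (norm := noncomm_ring)
    (G.h s * (G.rhvp s)) + ((4) * G.Xp s * (G.rXmvp s)) + ((2) * G.vp s * (G.rvmvp s)) + ((-4) * (G.rvpvp s) * G.vm s) + ((G.rhvp s) * G.h s) + ((4) * (G.rXpvp s) * G.Xm s)
lemma casC_vm (s : Fin N) :
    G.Cas s * G.vm s = G.vm s * G.Cas s := by
  simp only [Cas, sm2, sm4]
  linear_combination (norm := noncomm_ring)
    (G.h s * (G.rhvm s)) + ((-2) * (G.rhvm s)) + ((4) * G.Xp s * (G.rXmvm s)) + ((2) * G.vp s * (G.rvmvm s)) + ((-2) * (G.rvmvp s) * G.vm s) + ((G.rhvm s) * G.h s) + ((4) * (G.rXpvm s) * G.Xm s) + ((2) * (G.rhvm s)) + ((2) * G.vp s * (G.rvmvm s))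
lemma casX_h {a b : Fin N} (hab : a ≠ b) :
    G.Cas a * G.h b = G.h b * G.Cas a := by
  have hba := hab.symm; simp only [Cas, sm2, sm4]
  linear_combination (norm := noncomm_ring)
    (-(G.cE_h_h hba) * G.h a) + ((G.cE_h_h hba)) + ((-4) * (G.cE_h_Xp hba) * G.Xm a) + ((-2) * (G.cE_h_vp hba) * G.vm a) + (-G.h a * (G.cE_h_h hba)) + ((-4) * G.Xp a * (G.cE_h_Xm hba)) + ((-2) * G.vp a * (G.cE_h_vm hba))
lemma casX_Xp {a b : Fin N} (hab : a ≠ b) :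
    G.Cas a * G.Xp b = G.Xp b * G.Cas a := by
  have hba := hab.symm; simp only [Cas, sm2, sm4]
  linear_combination (norm := noncomm_ring)
    (-(G.cE_Xp_h hba) * G.h a) + ((G.cE_Xp_h hba)) + ((-4) * (G.cE_Xp_Xp hba) * G.Xm a) + ((-2) * (G.cE_Xp_vp hba) * G.vm a) + (-G.h a * (G.cE_Xp_h hba)) + ((-4) * G.Xp a * (G.cE_Xp_Xm hba)) + ((-2) * G.vp a * (G.cE_Xp_vm hba))
lemma casX_Xm {a b : Fin N} (hab : a ≠ b) :
    G.Cas a * G.Xm b = G.Xm b * G.Cas a := by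
  have hba := hab.symm; simp only [Cas, sm2, sm4]
  linear_combination (norm := noncomm_ring)
    (-(G.cE_Xm_h hba) * G.h a) + ((G.cE_Xm_h hba)) + ((-4) * (G.cE_Xm_Xp hba) * G.Xm a) + ((-2) * (G.cE_Xm_vp hba) * G.vm a) + (-G.h a * (G.cE_Xm_h hba)) + ((-4) * G.Xp a * (G.cE_Xm_Xm hba)) + ((-2) * G.vp a * (G.cE_Xm_vm hba))
lemma casX_vp {a b : Fin N} (hab : a ≠ b) :
    G.Cas a * G.vp b = G.vp b * G.Cas a := by
  have hba := hab.symm; simp only [Cas, sm2, sm4]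
  linear_combination (norm := noncomm_ring)
    (-((G.cE_h_vp hab).symm) * G.h a) + (((G.cE_h_vp hab).symm)) + ((-4) * ((G.cE_Xp_vp hab).symm) * G.Xm a) + ((-2) * (G.acO_vp_vp hba) * G.vm a) + (-G.h a * ((G.cE_h_vp hab).symm)) + ((-4) * G.Xp a * ((G.cE_Xm_vp hab).symm)) + ((2) * G.vp a * (G.acO_vp_vm hba))
lemma casX_vm {a b : Fin N} (hab : a ≠ b) :
    G.Cas a * G.vm b = G.vm b * G.Cas a := by
  have hba := hab.symm; simp only [Cas, sm2, sm4]
  linear_combination (norm := noncomm_ring)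
    (-((G.cE_h_vm hab).symm) * G.h a) + (((G.cE_h_vm hab).symm)) + ((-4) * ((G.cE_Xp_vm hab).symm) * G.Xm a) + ((-2) * (G.acO_vm_vp hba) * G.vm a) + (-G.h a * ((G.cE_h_vm hab).symm)) + ((-4) * G.Xp a * ((G.cE_Xm_vm hab).symm)) + ((2) * G.vp a * (G.acO_vm_vm hba))
lemma inv_h {x y : Fin N} (hxy : x ≠ y) :
    G.Th x y * (G.h x + G.h y) = (G.h x + G.h y) * G.Th x y := by
  have hyx := hxy.symm; simp only [Th, sm2]
  linear_combination (norm := noncomm_ring)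
    (G.h x * (G.cE_h_h hyx)) + ((2) * G.Xp x * (G.cE_Xm_h hyx)) + ((2) * G.Xp x * (G.rXmh y)) + ((2) * G.Xm x * (G.cE_Xp_h hyx)) + ((2) * G.Xm x * (G.rXph y)) + (G.vp x * ((G.cE_h_vm hxy).symm)) + (-G.vm x * ((G.cE_h_vp hxy).symm)) + (-(G.rhvp x) * G.vm y) + ((G.rhvm x) * G.vp y) + (-(G.cE_h_h hyx) * G.h y) + ((-2) * (G.cE_h_Xp hyx) * G.Xm y) + ((-2) * (G.cE_h_Xm hyx) * G.Xp y) + (-(G.cE_h_vp hyx) * G.vm y) + ((G.cE_h_vm hyx) * G.vp y) + ((2) * (G.rXph x) * G.Xm y) + ((2) * (G.rXmh x) * G.Xp y) + (-G.vp x * (G.rhvm y)) + (G.vm x * (G.rhvp y))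
lemma inv_Xp {x y : Fin N} (hxy : x ≠ y) :
    G.Th x y * (G.Xp x + G.Xp y) = (G.Xp x + G.Xp y) * G.Th x y := by
  have hyx := hxy.symm; simp only [Th, sm2]
  linear_combination (norm := noncomm_ring)
    (G.h x * (G.cE_h_Xp hyx)) + ((2) * G.Xp x * (G.cE_Xm_Xp hyx)) + ((2) * G.Xp x * (G.rXmXp y)) + ((2) * G.Xm x * (G.cE_Xp_Xp hyx)) + (G.vp x * ((G.cE_Xp_vm hxy).symm)) + (-G.vm x * ((G.cE_Xp_vp hxy).symm)) + (-(G.rXph x) * G.h y) + (-(G.rXpvp x) * G.vm y) + ((G.rXpvm x) * G.vp y) + (-(G.cE_Xp_h hyx) * G.h y) + ((-2) * (G.cE_Xp_Xp hyx) * G.Xm y) + ((-2) * (G.cE_Xp_Xm hyx) * G.Xp y) + (-(G.cE_Xp_vp hyx) * G.vm y) + ((G.cE_Xp_vm hyx) * G.vp y) + ((2) * (G.rXmXp x) * G.Xp y) + (-G.h x * (G.rXph y)) + (-G.vp x * (G.rXpvm y)) + (G.vm x * (G.rXpvp y))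
lemma inv_Xm {x y : Fin N} (hxy : x ≠ y) :
    G.Th x y * (G.Xm x + G.Xm y) = (G.Xm x + G.Xm y) * G.Th x y := by
  have hyx := hxy.symm; simp only [Th, sm2]
  linear_combination (norm := noncomm_ring)
    (G.h x * (G.cE_h_Xm hyx)) + ((2) * G.Xp x * (G.cE_Xm_Xm hyx)) + ((2) * G.Xm x * (G.cE_Xp_Xm hyx)) + (G.vp x * ((G.cE_Xm_vm hxy).symm)) + (-G.vm x * ((G.cE_Xm_vp hxy).symm)) + (-(G.rXmh x) * G.h y) + ((-2) * (G.rXmXp x) * G.Xm y) + (-(G.rXmvp x) * G.vm y) + ((G.rXmvm x) * G.vp y) + (-(G.cE_Xm_h hyx) * G.h y) + ((-2) * (G.cE_Xm_Xp hyx) * G.Xm y) + ((-2) * (G.cE_Xm_Xm hyx) * G.Xp y) + (-(G.cE_Xm_vp hyx) * G.vm y) + ((G.cE_Xm_vm hyx) * G.vp y) + (-G.h x * (G.rXmh y)) + ((-2) * G.Xm x * (G.rXmXp y)) + (-G.vp x * (G.rXmvm y)) + (G.vm x * (G.rXmvp y))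
lemma inv_vp {x y : Fin N} (hxy : x ≠ y) :
    G.Th x y * (G.vp x + G.vp y) = (G.vp x + G.vp y) * G.Th x y := by
  have hyx := hxy.symm; simp only [Th, sm2]
  linear_combination (norm := noncomm_ring)
    (G.h x * (G.cE_h_vp hyx)) + (G.h x * (G.rhvp y)) + ((2) * G.Xp x * (G.cE_Xm_vp hyx)) + ((2) * G.Xp x * (G.rXmvp y)) + ((2) * G.Xm x * (G.cE_Xp_vp hyx)) + ((2) * G.Xm x * (G.rXpvp y)) + (G.vp x * (G.acO_vm_vp hyx)) + (G.vp x * (G.rvmvp y)) + (-G.vm x * (G.acO_vp_vp hyx)) + (-G.vm x * (G.rvpvp y)) + ((-2) * (G.rvpvp x) * G.vm y) + (-((G.cE_h_vp hxy).symm) * G.h y) + ((-2) * ((G.cE_Xp_vp hxy).symm) * G.Xm y) + ((-2) * ((G.cE_Xm_vp hxy).symm) * G.Xp y) + (-(G.acO_vp_vp hyx) * G.vm y) + ((G.acO_vp_vm hyx) * G.vp y) + ((G.rhvp x) * G.h y) + ((2) * (G.rXpvp x) * G.Xm y) + ((2) * (G.rXmvp x) * G.Xp y) + ((G.rvmvp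 x) * G.vp y) + (-G.vm x * (G.rvpvp y))
lemma inv_vm {x y : Fin N} (hxy : x ≠ y) :
    G.Th x y * (G.vm x + G.vm y) = (G.vm x + G.vm y) * G.Th x y := by
  have hyx := hxy.symm; simp only [Th, sm2]
  linear_combination (norm := noncomm_ring)
    (G.h x * (G.cE_h_vm hyx)) + (G.h x * (G.rhvm y)) + ((2) * G.Xp x * (G.cE_Xm_vm hyx)) + ((2) * G.Xp x * (G.rXmvm y)) + ((2) * G.Xm x * (G.cE_Xp_vm hyx)) + ((2) * G.Xm x * (G.rXpvm y)) + (G.vp x * (G.acO_vm_vm hyx)) + (G.vp x * (G.rvmvm y)) + (-G.vm x * (G.acO_vp_vm hyx)) + (-(G.rvmvp x) * G.vm y) + ((2) * (G.rvmvm x) * G.vp y) + (-((G.cE_h_vm hxy).symm) * G.h y) + ((-2) * ((G.cE_Xp_vm hxy).symm) * G.Xm y) + ((-2) * ((G.cE_Xm_vm hxy).symm) * G.Xp y) + (-(G.acO_vm_vp hyx) * G.vm y) + ((G.acO_vm_vm hyx) * G.vp y) + ((G.rhvm x) * G.h y) + ((2) * (G.rXpvm x) * G.Xm y) + ((2) *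 (G.rXmvm x) * G.Xp y) + (G.vp x * (G.rvmvm y)) + (-G.vm x * (G.rvmvp y))
lemma third_h {x y e : Fin N} (hxy : x ≠ y) (hxe : x ≠ e) (hye : y ≠ e) :
    G.Th x y * G.h e = G.h e * G.Th x y := by
  have hyx := hxy.symm; have hex := hxe.symm; have hey := hye.symm; simp only [Th, sm2]
  linear_combination (norm := noncomm_ring)
    (-(G.cE_h_h hex) * G.h y) + ((-2) * (G.cE_h_Xp hex) * G.Xm y) + ((-2) * (G.cE_h_Xm hex) * G.Xp y) + (-(G.cE_h_vp hex) * G.vm y) + ((G.cE_h_vm hex) * G.vp y) + (-G.h x * (G.cE_h_h hey)) + ((-2) * G.Xp x * (G.cE_h_Xm hey)) + ((-2) * G.Xm x * (G.cE_h_Xp hey)) + (-G.vp x * (G.cE_h_vm hey)) + (G.vm x * (G.cE_h_vp hey))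
lemma third_Xp {x y e : Fin N} (hxy : x ≠ y) (hxe : x ≠ e) (hye : y ≠ e) :
    G.Th x y * G.Xp e = G.Xp e * G.Th x y := by
  have hyx := hxy.symm; have hex := hxe.symm; have hey := hye.symm; simp only [Th, sm2]
  linear_combination (norm := noncomm_ring)
    (-(G.cE_Xp_h hex) * G.h y) + ((-2) * (G.cE_Xp_Xp hex) * G.Xm y) + ((-2) * (G.cE_Xp_Xm hex) * G.Xp y) + (-(G.cE_Xp_vp hex) * G.vm y) + ((G.cE_Xp_vm hex) * G.vp y) + (-G.h x * (G.cE_Xp_h hey)) + ((-2) * G.Xp x * (G.cE_Xp_Xm hey)) + ((-2) * G.Xm x * (G.cE_Xp_Xp hey)) + (-G.vp x * (G.cE_Xp_vm hey)) + (G.vm x * (G.cE_Xp_vp hey))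
lemma third_Xm {x y e : Fin N} (hxy : x ≠ y) (hxe : x ≠ e) (hye : y ≠ e) :
    G.Th x y * G.Xm e = G.Xm e * G.Th x y := by
  have hyx := hxy.symm; have hex := hxe.symm; have hey := hye.symm; simp only [Th, sm2]
  linear_combination (norm := noncomm_ring)
    (-(G.cE_Xm_h hex) * G.h y) + ((-2) * (G.cE_Xm_Xp hex) * G.Xm y) + ((-2) * (G.cE_Xm_Xm hex) * G.Xp y) + (-(G.cE_Xm_vp hex) * G.vm y) + ((G.cE_Xm_vm hex) * G.vp y) + (-G.h x * (G.cE_Xm_h hey)) + ((-2) * G.Xp x * (G.cE_Xm_Xm hey)) + ((-2) * G.Xm x * (G.cE_Xm_Xp hey)) + (-G.vp x * (G.cE_Xm_vm hey)) + (G.vm x * (G.cE_Xm_vp hey))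
lemma third_vp {x y e : Fin N} (hxy : x ≠ y) (hxe : x ≠ e) (hye : y ≠ e) :
    G.Th x y * G.vp e = G.vp e * G.Th x y := by
  have hyx := hxy.symm; have hex := hxe.symm; have hey := hye.symm; simp only [Th, sm2]
  linear_combination (norm := noncomm_ring)
    (-((G.cE_h_vp hxe).symm) * G.h y) + ((-2) * ((G.cE_Xp_vp hxe).symm) * G.Xm y) + ((-2) * ((G.cE_Xm_vp hxe).symm) * G.Xp y) + (-(G.acO_vp_vp hex) * G.vm y) + ((G.acO_vp_vm hex) * G.vp y) + (-G.h x * ((G.cE_h_vp hye).symm)) + ((-2) * G.Xp x * ((G.cE_Xm_vp hye).symm)) + ((-2) * G.Xm x * ((G.cE_Xp_vp hye).symm)) + (G.vp x * (G.acO_vp_vm hey)) + (-G.vm x * (G.acO_vp_vp hey))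
lemma third_vm {x y e : Fin N} (hxy : x ≠ y) (hxe : x ≠ e) (hye : y ≠ e) :
    G.Th x y * G.vm e = G.vm e * G.Th x y := by
  have hyx := hxy.symm; have hex := hxe.symm; have hey := hye.symm; simp only [Th, sm2]
  linear_combination (norm := noncomm_ring)
    (-((G.cE_h_vm hxe).symm) * G.h y) + ((-2) * ((G.cE_Xp_vm hxe).symm) * G.Xm y) + ((-2) * ((G.cE_Xm_vm hxe).symm) * G.Xp y) + (-(G.acO_vm_vp hex) * G.vm y) + ((G.acO_vm_vm hex) * G.vp y) + (-G.h x * ((G.cE_h_vm hye).symm)) + ((-2) * G.Xp x * ((G.cE_Xm_vm hye).symm)) + ((-2) * G.Xm x * ((G.cE_Xp_vm hye).symm)) + (G.vp x * (G.acO_vm_vm hey)) + (-G.vm x * (G.acO_vm_vp hey))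
lemma Th_symm {x y : Fin N} (hxy : x ≠ y) :
    G.Th x y = G.Th y x := by
  have hyx := hxy.symm; simp only [Th, sm2]
  linear_combination (norm := noncomm_ring)
    (-(G.cE_h_h hyx)) + ((-2) * (G.cE_Xp_Xm hyx)) + ((-2) * (G.cE_Xm_Xp hyx)) + (-(G.acO_vp_vm hyx)) + ((G.acO_vm_vp hyx))
lemma offdiag {a b : Fin N} (hab : a ≠ b) :
    G.h a * G.h b + G.h b * G.h a + (4:ℂ) • (G.Xp a * G.Xm b + G.Xp b * G.Xm a) + (2:ℂ) • (G.vp a * G.vm b + G.vp b * G.vm a) = (2:ℂ) • G.Th a b := by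
  have hba := hab.symm; simp only [Th, sm2, sm4]
  linear_combination (norm := noncomm_ring)
    ((G.cE_h_h hba)) + ((4) * (G.cE_Xp_Xm hba)) + ((2) * (G.acO_vp_vm hba))
lemma invC_h {x y : Fin N} (hxy : x ≠ y) : Commute (G.Th x y) (G.h x + G.h y) := G.inv_h hxy
lemma thirdC_h {x y e : Fin N} (hxy : x ≠ y) (hxe : x ≠ e) (hye : y ≠ e) : Commute (G.Th x y) (G.h e) := G.third_h hxy hxe hye
lemma invC_Xp {x y : Fin N} (hxy : x ≠ y) : Commute (G.Th x y) (G.Xp x + G.Xp y) := G.inv_Xp hxy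
lemma thirdC_Xp {x y e : Fin N} (hxy : x ≠ y) (hxe : x ≠ e) (hye : y ≠ e) : Commute (G.Th x y) (G.Xp e) := G.third_Xp hxy hxe hye
lemma invC_Xm {x y : Fin N} (hxy : x ≠ y) : Commute (G.Th x y) (G.Xm x + G.Xm y) := G.inv_Xm hxy
lemma thirdC_Xm {x y e : Fin N} (hxy : x ≠ y) (hxe : x ≠ e) (hye : y ≠ e) : Commute (G.Th x y) (G.Xm e) := G.third_Xm hxy hxe hye
lemma invC_vp {x y : Fin N} (hxy : x ≠ y) : Commute (G.Th x y) (G.vp x + G.vp y) := G.inv_vp hxy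
lemma thirdC_vp {x y e : Fin N} (hxy : x ≠ y) (hxe : x ≠ e) (hye : y ≠ e) : Commute (G.Th x y) (G.vp e) := G.third_vp hxy hxe hye
lemma invC_vm {x y : Fin N} (hxy : x ≠ y) : Commute (G.Th x y) (G.vm x + G.vm y) := G.inv_vm hxy
lemma thirdC_vm {x y e : Fin N} (hxy : x ≠ y) (hxe : x ≠ e) (hye : y ≠ e) : Commute (G.Th x y) (G.vm e) := G.third_vm hxy hxe hye
end Certs
end OspGaudinData

namespace OspGaudinData
section Struct
variable {N : ℕ} {H : Type*} [AddCommGroup H] [Module ℂ H] (G : OspGaudinData N H)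

lemma zsub_ne {i j : Fin N} (hij : i ≠ j) : G.z i - G.z j ≠ 0 :=
  sub_ne_zero.mpr fun e => hij (G.z_inj e)

/-- build Commute with Th from generator commutes -/
lemma commute_Th {P : Module.End ℂ H} {x y : Fin N}
    (h1 : Commute P (G.h x)) (h2 : Commute P (G.h y))
    (h3 : Commute P (G.Xp x)) (h4 : Commute P (G.Xm y))
    (h5 : Commute P (G.Xm x)) (h6 : Commute P (G.Xp y))
    (h7 : Commute P (G.vp x)) (h8 : Commute P (G.vm y))
    (h9 : Commute P (G.vm x)) (h10 : Commute P (G.vp y)) :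
    Commute P (G.Th x y) :=
  ((h1.mul_right h2).add_right
    (((h3.mul_right h4).add_right (h5.mul_right h6)).smul_right _)).add_right
      ((h7.mul_right h8).sub_right (h9.mul_right h10))

lemma commute_Cas {P : Module.End ℂ H} {a : Fin N}
    (h1 : Commute P (G.h a)) (h2 : Commute P (G.Xp a))
    (h3 : Commute P (G.Xm a)) (h4 : Commute P (G.vp a))
    (h5 : Commute P (G.vm a)) : Commute P (G.Cas a) :=
  (((h1.mul_right h1).sub_right h1).add_right ((h2.mul_right h3).smul_right _)).add_right
    ((h4.mul_right h5).smul_right _)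

lemma casG_h (a s : Fin N) : Commute (G.Cas a) (G.h s) := by
  rcases eq_or_ne a s with rfl | hne
  · exact G.casC_h a
  · exact G.casX_h hne
lemma casG_Xp (a s : Fin N) : Commute (G.Cas a) (G.Xp s) := by
  rcases eq_or_ne a s with rfl | hne
  · exact G.casC_Xp a
  · exact G.casX_Xp hne
lemma casG_Xm (a s : Fin N) : Commute (G.Cas a) (G.Xm s) := by
  rcases eq_or_ne a s with rfl | hne
  · exact G.casC_Xm a
  · exact G.casX_Xm hne
lemma casG_vp (a s : Fin N) : Commute (G.Cas a) (G.vp s) := by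
  rcases eq_or_ne a s with rfl | hne
  · exact G.casC_vp a
  · exact G.casX_vp hne
lemma casG_vm (a s : Fin N) : Commute (G.Cas a) (G.vm s) := by
  rcases eq_or_ne a s with rfl | hne
  · exact G.casC_vm a
  · exact G.casX_vm hne

lemma commute_Cas_Cas (a b : Fin N) : Commute (G.Cas a) (G.Cas b) :=
  G.commute_Cas (G.casG_h a b) (G.casG_Xp a b) (G.casG_Xm a b) (G.casG_vp a b) (G.casG_vm a b)

lemma commute_Cas_Th (a : Fin N) {x y : Fin N} : Commute (G.Cas a) (G.Th x y) :=
  G.commute_Th (G.casG_h a x) (G.casG_h a y) (G.casG_Xp a x) (G.casG_Xm a y)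
    (G.casG_Xm a x) (G.casG_Xp a y) (G.casG_vp a x) (G.casG_vm a y)
    (G.casG_vm a x) (G.casG_vp a y)

lemma commute_Cas_Gham (a b : Fin N) : Commute (G.Cas a) (G.Gham b) := by
  rw [Gham_eq]
  exact Commute.sum_right _ _ _ fun d _ => (G.commute_Cas_Th a).smul_right _

/-- Th at disjoint pairs of sites commute -/
lemma commute_Th_Th {a c b d : Fin N} (hac : a ≠ c) (hab : a ≠ b) (hcb : c ≠ b)
    (had : a ≠ d) (hcd : c ≠ d) : Commute (G.Th a c) (G.Th b d) :=
  G.commute_Th (G.thirdC_h hac hab hcb) (G.thirdC_h hac had hcd)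
    (G.thirdC_Xp hac hab hcb) (G.thirdC_Xm hac had hcd)
    (G.thirdC_Xm hac hab hcb) (G.thirdC_Xp hac had hcd)
    (G.thirdC_vp hac hab hcb) (G.thirdC_vm hac had hcd)
    (G.thirdC_vm hac hab hcb) (G.thirdC_vp hac had hcd)

/-- key invariance lemma -/
lemma keyK {x y e : Fin N} (hxy : x ≠ y) (hxe : x ≠ e) (hye : y ≠ e) :
    Commute (G.Th x y) (G.Th x e + G.Th y e) := by
  have dec : G.Th x e + G.Th y e
      = (G.h x + G.h y) * G.h e
        + (2:ℂ) • ((G.Xp x + G.Xp y) * G.Xm e + (G.Xm x + G.Xm y) * G.Xp e)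
        + ((G.vp x + G.vp y) * G.vm e - (G.vm x + G.vm y) * G.vp e) := by
    simp only [Th, sm2]; noncomm_ring
  rw [dec]
  exact (((G.invC_h hxy).mul_right (G.thirdC_h hxy hxe hye)).add_right
    ((((G.invC_Xp hxy).mul_right (G.thirdC_Xm hxy hxe hye)).add_right
      ((G.invC_Xm hxy).mul_right (G.thirdC_Xp hxy hxe hye))).smul_right _)).add_right
    (((G.invC_vp hxy).mul_right (G.thirdC_vm hxy hxe hye)).sub_right
      ((G.invC_vm hxy).mul_right (G.thirdC_vp hxy hxe hye)))

/-- the three-term cancellation -/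
lemma triple {a b e : Fin N} (hab : a ≠ b) (hae : a ≠ e) (hbe : b ≠ e) :
    ((G.z a - G.z b)⁻¹ * (G.z b - G.z e)⁻¹) • (G.Th a b * G.Th b e - G.Th b e * G.Th a b)
    + (((G.z a - G.z e)⁻¹ * (G.z b - G.z a)⁻¹) • (G.Th a e * G.Th b a - G.Th b a * G.Th a e)
      + ((G.z a - G.z e)⁻¹ * (G.z b - G.z e)⁻¹) • (G.Th a e * G.Th b e - G.Th b e * G.Th a e)) = 0 := by
  have K1 : G.Th a b * (G.Th a e + G.Th b e) = (G.Th a e + G.Th b e) * G.Th a b :=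
    G.keyK hab hae hbe
  have K2' : G.Th a e * (G.Th a b + G.Th e b) = (G.Th a b + G.Th e b) * G.Th a e :=
    G.keyK hae hab hbe.symm
  rw [G.Th_symm hbe.symm] at K2'
  have e1 : G.Th a b * G.Th b e - G.Th b e * G.Th a b
      = -(G.Th a b * G.Th a e - G.Th a e * G.Th a b) := by
    linear_combination (norm := noncomm_ring) K1
  have e2 : G.Th a e * G.Th b e - G.Th b e * G.Th a e
      = G.Th a b * G.Th a e - G.Th a e * G.Th a b := by
    linear_combination (norm := noncomm_ring) K2'
  rw [G.Th_symm hab.symm, e1, e2]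
  have hzab := G.zsub_ne hab
  have hzae := G.zsub_ne hae
  have hzbe := G.zsub_ne hbe
  have hzba := G.zsub_ne hab.symm
  match_scalars
  · field_simp
    ring
  · field_simp
    ring

lemma erase_swap (a b : Fin N) :
    (Finset.univ.erase a).erase b = (Finset.univ.erase b).erase a := by
  ext x; simp only [Finset.mem_erase, Finset.mem_univ, and_true]; tauto

lemma S_zero {a b : Fin N} (hab : a ≠ b) :
    ∑ c ∈ Finset.univ.erase a, ∑ d ∈ Finset.univ.erase b,
      (((G.z a - G.z c)⁻¹ * (G.z b - G.z d)⁻¹) •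
        (G.Th a c * G.Th b d - G.Th b d * G.Th a c)) = 0 := by
  have hbA : b ∈ Finset.univ.erase a := Finset.mem_erase.mpr ⟨hab.symm, Finset.mem_univ b⟩
  have haB : a ∈ Finset.univ.erase b := Finset.mem_erase.mpr ⟨hab, Finset.mem_univ a⟩
  rw [← Finset.add_sum_erase _ _ hbA, ← Finset.add_sum_erase _ _ haB]
  have Dba : ((G.z a - G.z b)⁻¹ * (G.z b - G.z a)⁻¹) •
      (G.Th a b * G.Th b a - G.Th b a * G.Th a b) = 0 := by
    rw [← G.Th_symm hab, sub_self, smul_zero]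
  have inner : ∀ c ∈ (Finset.univ.erase a).erase b,
      (∑ d ∈ Finset.univ.erase b, ((G.z a - G.z c)⁻¹ * (G.z b - G.z d)⁻¹) •
        (G.Th a c * G.Th b d - G.Th b d * G.Th a c))
      = ((G.z a - G.z c)⁻¹ * (G.z b - G.z a)⁻¹) •
          (G.Th a c * G.Th b a - G.Th b a * G.Th a c)
        + ((G.z a - G.z c)⁻¹ * (G.z b - G.z c)⁻¹) •
          (G.Th a c * G.Th b c - G.Th b c * G.Th a c) := by
    intro c hc
    have hcb : c ≠ b := (Finset.mem_erase.mp hc).1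
    have hca : c ≠ a := (Finset.mem_erase.mp (Finset.mem_erase.mp hc).2).1
    have hcB : c ∈ (Finset.univ.erase b).erase a :=
      Finset.mem_erase.mpr ⟨hca, Finset.mem_erase.mpr ⟨hcb, Finset.mem_univ c⟩⟩
    rw [← Finset.add_sum_erase _ _ haB, ← Finset.add_sum_erase _ _ hcB]
    have rest : ∑ d ∈ ((Finset.univ.erase b).erase a).erase c,
        ((G.z a - G.z c)⁻¹ * (G.z b - G.z d)⁻¹) •
          (G.Th a c * G.Th b d - G.Th b d * G.Th a c) = 0 := by
      apply Finset.sum_eq_zero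
      intro d hd
      have hdc : d ≠ c := (Finset.mem_erase.mp hd).1
      have hda : d ≠ a := (Finset.mem_erase.mp (Finset.mem_erase.mp hd).2).1
      have hdb : d ≠ b := (Finset.mem_erase.mp
        (Finset.mem_erase.mp (Finset.mem_erase.mp hd).2).2).1
      rw [(G.commute_Th_Th hca.symm hab hcb hda.symm hdc.symm).eq, sub_self, smul_zero]
    rw [rest, add_zero]
  have h2 : (∑ c ∈ (Finset.univ.erase a).erase b,
      ∑ d ∈ Finset.univ.erase b, ((G.z a - G.z c)⁻¹ * (G.z b - G.z d)⁻¹) •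
        (G.Th a c * G.Th b d - G.Th b d * G.Th a c))
      = ∑ c ∈ (Finset.univ.erase a).erase b,
        (((G.z a - G.z c)⁻¹ * (G.z b - G.z a)⁻¹) •
          (G.Th a c * G.Th b a - G.Th b a * G.Th a c)
        + ((G.z a - G.z c)⁻¹ * (G.z b - G.z c)⁻¹) •
          (G.Th a c * G.Th b c - G.Th b c * G.Th a c)) :=
    Finset.sum_congr rfl inner
  rw [h2, Dba, zero_add, erase_swap a b, ← Finset.sum_add_distrib]
  apply Finset.sum_eq_zero
  intro e he
  have hea : e ≠ a := (Finset.mem_erase.mp he).1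
  have heb : e ≠ b := (Finset.mem_erase.mp (Finset.mem_erase.mp he).2).1
  exact G.triple hab hea.symm heb.symm

end Struct
end OspGaudinData

namespace OspGaudinData
section Struct2
variable {N : ℕ} {H : Type*} [AddCommGroup H] [Module ℂ H] (G : OspGaudinData N H)

lemma sdiff_smul (c d : ℂ) (X Y : Module.End ℂ H) :
    (c • X) * (d • Y) - (d • Y) * (c • X) = (c * d) • (X * Y - Y * X) := by
  rw [smul_mul_smul_comm, smul_mul_smul_comm, mul_comm d c, ← smul_sub]

lemma commute_Gham_Gham (a b : Fin N) : Commute (G.Gham a) (G.Gham b) := by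
  rcases eq_or_ne a b with rfl | hab
  · exact Commute.refl _
  · show G.Gham a * G.Gham b = G.Gham b * G.Gham a
    rw [← sub_eq_zero]
    have expand : G.Gham a * G.Gham b - G.Gham b * G.Gham a
        = ∑ c ∈ Finset.univ.erase a, ∑ d ∈ Finset.univ.erase b,
            (((G.z a - G.z c)⁻¹ * (G.z b - G.z d)⁻¹) •
              (G.Th a c * G.Th b d - G.Th b d * G.Th a c)) := by
      rw [Gham_eq, Gham_eq, Finset.sum_mul_sum, Finset.sum_mul_sum,
        Finset.sum_comm (s := Finset.univ.erase b) (t := Finset.univ.erase a)]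
      simp only [← Finset.sum_sub_distrib]
      simp only [sdiff_smul]
    rw [expand]
    exact G.S_zero hab

lemma swap_offdiag (F : Fin N → Fin N → Module.End ℂ H) :
    (∑ a, ∑ b ∈ Finset.univ.erase a, F a b) = ∑ a, ∑ b ∈ Finset.univ.erase a, F b a :=
  Finset.sum_comm' fun x y => by
    simp only [Finset.mem_univ, true_and, and_true, Finset.mem_erase]
    exact ne_comm

lemma bilin (lam : ℂ) (hlz : ∀ a, lam ≠ G.z a) (A B : Fin N → Module.End ℂ H) :
    (∑ a, (lam - G.z a)⁻¹ • A a) * (∑ a, (lam - G.z a)⁻¹ • B a)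
    = (∑ a, ((lam - G.z a)⁻¹ * (lam - G.z a)⁻¹) • (A a * B a))
      + ∑ a, (lam - G.z a)⁻¹ •
          (∑ b ∈ Finset.univ.erase a, (G.z a - G.z b)⁻¹ • (A a * B b + A b * B a)) := by
  rw [Finset.sum_mul_sum]
  simp only [smul_mul_smul_comm]
  have step1 : (∑ a : Fin N, ∑ b : Fin N,
        ((lam - G.z a)⁻¹ * (lam - G.z b)⁻¹) • (A a * B b))
      = ∑ a : Fin N, (((lam - G.z a)⁻¹ * (lam - G.z a)⁻¹) • (A a * B a)
        + ∑ b ∈ Finset.univ.erase a, ((lam - G.z a)⁻¹ * (lam - G.z b)⁻¹) • (A a * B b)) :=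
    Finset.sum_congr rfl fun a _ => (Finset.add_sum_erase _ _ (Finset.mem_univ a)).symm
  rw [step1, Finset.sum_add_distrib]
  congr 1
  have split : (∑ a : Fin N, ∑ b ∈ Finset.univ.erase a,
        ((lam - G.z a)⁻¹ * (lam - G.z b)⁻¹) • (A a * B b))
      = ∑ a : Fin N, ∑ b ∈ Finset.univ.erase a,
          ((lam - G.z a)⁻¹ • ((G.z a - G.z b)⁻¹ • (A a * B b))
            + (lam - G.z b)⁻¹ • ((G.z b - G.z a)⁻¹ • (A a * B b))) := by
    apply Finset.sum_congr rfl; intro a _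
    apply Finset.sum_congr rfl; intro b hb
    have hba : b ≠ a := (Finset.mem_erase.mp hb).1
    have h1 : lam - G.z a ≠ 0 := sub_ne_zero.mpr (hlz a)
    have h2 : lam - G.z b ≠ 0 := sub_ne_zero.mpr (hlz b)
    have h3 : G.z a - G.z b ≠ 0 := G.zsub_ne hba.symm
    have h4 : G.z b - G.z a ≠ 0 := G.zsub_ne hba
    rw [smul_smul, smul_smul, ← add_smul]
    congr 1
    field_simp
    ring
  rw [split]
  simp only [Finset.sum_add_distrib]
  have swap2 : (∑ a : Fin N, ∑ b ∈ Finset.univ.erase a,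
        (lam - G.z b)⁻¹ • ((G.z b - G.z a)⁻¹ • (A a * B b)))
      = ∑ a : Fin N, ∑ b ∈ Finset.univ.erase a,
          (lam - G.z a)⁻¹ • ((G.z a - G.z b)⁻¹ • (A b * B a)) :=
    swap_offdiag (fun x y => (lam - G.z y)⁻¹ • ((G.z y - G.z x)⁻¹ • (A x * B y)))
  rw [swap2, ← Finset.sum_add_distrib]
  apply Finset.sum_congr rfl; intro a _
  rw [← Finset.sum_add_distrib, Finset.smul_sum]
  apply Finset.sum_congr rfl; intro b _
  rw [← smul_add, ← smul_add]

end Struct2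
end OspGaudinData

namespace OspGaudinData
section Struct3
variable {N : ℕ} {H : Type*} [AddCommGroup H] [Module ℂ H] (G : OspGaudinData N H)

lemma tOp_eq (lam : ℂ) (hlz : ∀ a, lam ≠ G.z a) :
    G.tOp lam = (∑ a, ((lam - G.z a)⁻¹ * (lam - G.z a)⁻¹) • G.Cas a)
      + ∑ a, (lam - G.z a)⁻¹ • ((2:ℂ) • G.Gham a) := by
  have hb1 := G.bilin lam hlz G.h G.h
  have hb2 := G.bilin lam hlz G.Xp G.Xm
  have hb3 := G.bilin lam hlz G.vp G.vm
  have hsq : G.hl' lam = ∑ a, -(((lam - G.z a)⁻¹ * (lam - G.z a)⁻¹) • G.h a) := by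
    unfold hl'
    rw [← Finset.sum_neg_distrib]
    apply Finset.sum_congr rfl; intro a _
    rw [sq, mul_inv]
  show G.hl lam * G.hl lam + G.hl' lam + (4:ℂ) • (G.Xpl lam * G.Xml lam)
      + (2:ℂ) • (G.vpl lam * G.vml lam) = _
  unfold hl Xpl Xml vpl vml
  rw [hb1, hb2, hb3, hsq, smul_add, smul_add]
  have e1 : (4:ℂ) • (∑ a, ((lam - G.z a)⁻¹ * (lam - G.z a)⁻¹) • (G.Xp a * G.Xm a))
      = ∑ a, (4:ℂ) • (((lam - G.z a)⁻¹ * (lam - G.z a)⁻¹) • (G.Xp a * G.Xm a)) :=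
    Finset.smul_sum
  have e2 : (4:ℂ) • (∑ a, (lam - G.z a)⁻¹ • (∑ b ∈ Finset.univ.erase a,
        (G.z a - G.z b)⁻¹ • (G.Xp a * G.Xm b + G.Xp b * G.Xm a)))
      = ∑ a, (4:ℂ) • ((lam - G.z a)⁻¹ • (∑ b ∈ Finset.univ.erase a,
        (G.z a - G.z b)⁻¹ • (G.Xp a * G.Xm b + G.Xp b * G.Xm a))) :=
    Finset.smul_sum
  have e3 : (2:ℂ) • (∑ a, ((lam - G.z a)⁻¹ * (lam - G.z a)⁻¹) • (G.vp a * G.vm a))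
      = ∑ a, (2:ℂ) • (((lam - G.z a)⁻¹ * (lam - G.z a)⁻¹) • (G.vp a * G.vm a)) :=
    Finset.smul_sum
  have e4 : (2:ℂ) • (∑ a, (lam - G.z a)⁻¹ • (∑ b ∈ Finset.univ.erase a,
        (G.z a - G.z b)⁻¹ • (G.vp a * G.vm b + G.vp b * G.vm a)))
      = ∑ a, (2:ℂ) • ((lam - G.z a)⁻¹ • (∑ b ∈ Finset.univ.erase a,
        (G.z a - G.z b)⁻¹ • (G.vp a * G.vm b + G.vp b * G.vm a))) :=
    Finset.smul_sum
  rw [e1, e2, e3, e4]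
  simp only [← Finset.sum_add_distrib]
  apply Finset.sum_congr rfl; intro a _
  have inner : (∑ b ∈ Finset.univ.erase a, (G.z a - G.z b)⁻¹ • (G.h a * G.h b + G.h b * G.h a))
      + (4:ℂ) • (∑ b ∈ Finset.univ.erase a,
          (G.z a - G.z b)⁻¹ • (G.Xp a * G.Xm b + G.Xp b * G.Xm a))
      + (2:ℂ) • (∑ b ∈ Finset.univ.erase a,
          (G.z a - G.z b)⁻¹ • (G.vp a * G.vm b + G.vp b * G.vm a))
      = (2:ℂ) • G.Gham a := by
    rw [Gham_eq, Finset.smul_sum, Finset.smul_sum, Finset.smul_sum,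
      ← Finset.sum_add_distrib, ← Finset.sum_add_distrib]
    apply Finset.sum_congr rfl; intro b hb
    have hab : a ≠ b := ((Finset.mem_erase.mp hb).1).symm
    calc (G.z a - G.z b)⁻¹ • (G.h a * G.h b + G.h b * G.h a)
          + (4:ℂ) • ((G.z a - G.z b)⁻¹ • (G.Xp a * G.Xm b + G.Xp b * G.Xm a))
          + (2:ℂ) • ((G.z a - G.z b)⁻¹ • (G.vp a * G.vm b + G.vp b * G.vm a))
        = (G.z a - G.z b)⁻¹ • (G.h a * G.h b + G.h b * G.h a
            + (4:ℂ) • (G.Xp a * G.Xm b + G.Xp b * G.Xm a)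
            + (2:ℂ) • (G.vp a * G.vm b + G.vp b * G.vm a)) := by module
      _ = (G.z a - G.z b)⁻¹ • ((2:ℂ) • G.Th a b) := by rw [G.offdiag hab]
      _ = (2:ℂ) • ((G.z a - G.z b)⁻¹ • G.Th a b) := smul_comm _ _ _
  calc ((lam - G.z a)⁻¹ * (lam - G.z a)⁻¹) • (G.h a * G.h a)
        + (lam - G.z a)⁻¹ • (∑ b ∈ Finset.univ.erase a,
            (G.z a - G.z b)⁻¹ • (G.h a * G.h b + G.h b * G.h a))
        + -(((lam - G.z a)⁻¹ * (lam - G.z a)⁻¹) • G.h a)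
        + ((4:ℂ) • (((lam - G.z a)⁻¹ * (lam - G.z a)⁻¹) • (G.Xp a * G.Xm a))
          + (4:ℂ) • ((lam - G.z a)⁻¹ • (∑ b ∈ Finset.univ.erase a,
              (G.z a - G.z b)⁻¹ • (G.Xp a * G.Xm b + G.Xp b * G.Xm a))))
        + ((2:ℂ) • (((lam - G.z a)⁻¹ * (lam - G.z a)⁻¹) • (G.vp a * G.vm a))
          + (2:ℂ) • ((lam - G.z a)⁻¹ • (∑ b ∈ Finset.univ.erase a,
              (G.z a - G.z b)⁻¹ • (G.vp a * G.vm b + G.vp b * G.vm a))))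
      = ((lam - G.z a)⁻¹ * (lam - G.z a)⁻¹) • G.Cas a
        + (lam - G.z a)⁻¹ • ((∑ b ∈ Finset.univ.erase a,
            (G.z a - G.z b)⁻¹ • (G.h a * G.h b + G.h b * G.h a))
          + (4:ℂ) • (∑ b ∈ Finset.univ.erase a,
              (G.z a - G.z b)⁻¹ • (G.Xp a * G.Xm b + G.Xp b * G.Xm a))
          + (2:ℂ) • (∑ b ∈ Finset.univ.erase a,
              (G.z a - G.z b)⁻¹ • (G.vp a * G.vm b + G.vp b * G.vm a))) := by
        simp only [Cas]; module
    _ = ((lam - G.z a)⁻¹ * (lam - G.z a)⁻¹) • G.Cas a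
        + (lam - G.z a)⁻¹ • ((2:ℂ) • G.Gham a) := by rw [inner]

end Struct3
end OspGaudinData

/-- the generating function of integrals of motion commutes with
itself at different values of the spectral parameter. -/
theorem tOp_commute {N : ℕ} {H : Type*} [AddCommGroup H] [Module ℂ H]
    (hN : 1 ≤ N) (G : OspGaudinData N H) (lam mu : ℂ)
    (hlam : ∀ a, lam ≠ G.z a) (hmu : ∀ a, mu ≠ G.z a) (hne : lam ≠ mu) :
    G.tOp lam * G.tOp mu = G.tOp mu * G.tOp lam := by
  rw [G.tOp_eq lam hlam, G.tOp_eq mu hmu]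
  have main : Commute
      ((∑ a, ((lam - G.z a)⁻¹ * (lam - G.z a)⁻¹) • G.Cas a)
        + ∑ a, (lam - G.z a)⁻¹ • ((2:ℂ) • G.Gham a))
      ((∑ a, ((mu - G.z a)⁻¹ * (mu - G.z a)⁻¹) • G.Cas a)
        + ∑ a, (mu - G.z a)⁻¹ • ((2:ℂ) • G.Gham a)) := by
    apply Commute.add_left
    · apply Commute.sum_left _ _ _ ?_; intro i _
      apply Commute.smul_left
      apply Commute.add_right
      · exact Commute.sum_right _ _ _ fun j _ => (G.commute_Cas_Cas i j).smul_right _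
      · exact Commute.sum_right _ _ _ fun j _ =>
          ((G.commute_Cas_Gham i j).smul_right _).smul_right _
    · apply Commute.sum_left _ _ _ ?_; intro i _
      apply Commute.smul_left
      apply Commute.smul_left
      apply Commute.add_right
      · exact Commute.sum_right _ _ _ fun j _ =>
          ((G.commute_Cas_Gham j i).symm.smul_right _)
      · exact Commute.sum_right _ _ _ fun j _ =>
          ((G.commute_Gham_Gham i j).smul_right _).smul_right _
  exact main
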